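/- Let $\mathcal{K}$ be a finite free simplicial $\mathbb{Z}_2$-complex triangulating the $n$-sphere (so $\|\mathcal{K}\| \cong \mathbb{S}^n$ equivariantly with the antipodal-type free action, $\mathrm{ind}_{\mathbb{Z}_2}\|\mathcal{K}\| = n$, and $\dim \mathcal{K} = n$). Then the strong compatibility graph $\widetilde{C}_{P(\mathcal{K})}$ of the face poset of $\mathcal{K}$ is triangle-free and has chromatic number exactly $n+1$. -/

import Mathlib

/-- The geometric realization of the order complex of a finite poset. -/
abbrev Realization (P : Type*) [PartialOrder P] [Fintype P] : Type _ :=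
  {w : P → ℝ // (∀ x, 0 ≤ w x) ∧ (∑ x, w x) = 1 ∧ IsChain (· ≤ ·) {x | w x ≠ 0}}

/-- Vertex set of the `m`-fold join `ℤ₂^{*m}` (with `ℤ₂` modelled by `Bool`),
ordered by `(g, x) ≺₁ (h, y)` iff `x < y`; its realization is an `E_{m-1}ℤ₂` space. -/
structure JoinVertex2 (m : ℕ) where
  b : Bool
  i : Fin m

instance (m : ℕ) : PartialOrder (JoinVertex2 m) where
  le a b := a = b ∨ a.i < b.i
  le_refl a := Or.inl rfl
  le_trans a b c hab hbc := by
    rcases hab with rfl | h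
    · exact hbc
    · rcases hbc with rfl | h'
      · exact Or.inr h
      · exact Or.inr (h.trans h')
  le_antisymm a b hab hba := by
    rcases hab with rfl | h
    · rfl
    · rcases hba with rfl | h'
      · rfl
      · exact absurd h' (lt_asymm h)

instance (m : ℕ) : Fintype (JoinVertex2 m) :=
  Fintype.ofEquiv (Bool × Fin m)
    ⟨fun p => ⟨p.1, p.2⟩, fun v => (v.b, v.i), fun _ => rfl, fun _ => rfl⟩

/-- The `ℤ₂`-index of (the realization of the order complex of) a finite poset `X`
with involution `ν`: the least `n` admitting a continuous `ℤ₂`-equivariant map to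
the `E_nℤ₂` space `‖Δ(ℤ₂ × [n+1])‖`. -/
noncomputable def indZ2 (X : Type*) [PartialOrder X] [Fintype X] (ν : X → X) : ℕ :=
  sInf {n : ℕ | ∃ Φ : Realization X → Realization (JoinVertex2 (n + 1)),
    Continuous Φ ∧
    ∀ x y : Realization X,
      (∀ q : X, y.val q = x.val (ν q)) →
      ∀ p : JoinVertex2 (n + 1), (Φ y).val p = (Φ x).val ⟨!p.b, p.i⟩}

/-- The involution on the face poset of a complex `K` induced by a vertex involution. -/
def negFace {V : Type*} [DecidableEq V] (neg : V → V) (K : Finset (Finset V))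
    (hact : ∀ s ∈ K, s.image neg ∈ K) : {s // s ∈ K} → {s // s ∈ K} :=
  fun s => ⟨s.1.image neg, hact s.1 s.2⟩

namespace SCG
set_option linter.unusedSectionVars false

open Finset

instance (m : ℕ) : DecidableEq (JoinVertex2 m) := fun a b =>
  decidable_of_iff (a.b = b.b ∧ a.i = b.i) (by cases a; cases b; simp)

lemma jv_le_def {m} (p q : JoinVertex2 m) : p ≤ q ↔ (p = q ∨ p.i < q.i) := Iff.rfl

variable {P : Type*} [PartialOrder P] [Fintype P] [DecidableEq P] {m : ℕ}

/-- max of the two colors of an orbit. -/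
def mval (ν : P → P) (c : P → Fin m) (x : P) : ℕ := max (c x : ℕ) (c (ν x) : ℕ)

noncomputable def sgnP (ν : P → P) (x : P) : Bool :=
  decide ((Fintype.equivFin P) x < (Fintype.equivFin P) (ν x))

noncomputable def epsP (ν : P → P) (c : P → Fin m) (x : P) : Bool :=
  if (c x : ℕ) = (c (ν x) : ℕ) then sgnP ν x else decide ((c (ν x) : ℕ) < (c x : ℕ))

def bigM (ν : P → P) (c : P → Fin m) (S : Finset P) : ℕ := S.sup (mval ν c)

def Aset (ν : P → P) (c : P → Fin m) (S : Finset P) : Finset P :=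
  S.filter fun x => mval ν c x = bigM ν c S

lemma Aset_nonempty (ν : P → P) (c : P → Fin m) {S : Finset P} (hS : S.Nonempty) :
    (Aset ν c S).Nonempty := by
  obtain ⟨x, hx, hsup⟩ := Finset.exists_mem_eq_sup S hS (mval ν c)
  exact ⟨x, Finset.mem_filter.mpr ⟨hx, hsup.symm⟩⟩

noncomputable def xstar (ν : P → P) (c : P → Fin m) (r : P → ℕ)
    (S : Finset P) (hS : S.Nonempty) : P :=
  (Finset.exists_mem_eq_sup (Aset ν c S) (Aset_nonempty ν c hS) r).choose

lemma xstar_spec (ν : P → P) (c : P → Fin m) (r : P → ℕ) (S : Finset P) (hS : S.Nonempty) :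
    xstar ν c r S hS ∈ Aset ν c S ∧ (Aset ν c S).sup r = r (xstar ν c r S hS) :=
  (Finset.exists_mem_eq_sup (Aset ν c S) (Aset_nonempty ν c hS) r).choose_spec

lemma xstar_mem (ν : P → P) (c : P → Fin m) (r : P → ℕ) (S : Finset P) (hS : S.Nonempty) :
    xstar ν c r S hS ∈ S := (Finset.mem_filter.mp (xstar_spec ν c r S hS).1).1

lemma xstar_mval (ν : P → P) (c : P → Fin m) (r : P → ℕ) (S : Finset P) (hS : S.Nonempty) :
    mval ν c (xstar ν c r S hS) = bigM ν c S :=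
  (Finset.mem_filter.mp (xstar_spec ν c r S hS).1).2

lemma mval_lt (ν : P → P) (c : P → Fin m) (x : P) : mval ν c x < m :=
  max_lt (c x).isLt (c (ν x)).isLt

noncomputable def Lhat (ν : P → P) (c : P → Fin m) (r : P → ℕ)
    (S : Finset P) (hS : S.Nonempty) : JoinVertex2 m :=
  ⟨epsP ν c (xstar ν c r S hS), ⟨mval ν c (xstar ν c r S hS), mval_lt ν c _⟩⟩

noncomputable def outSup (S : Finset P) (w : P → ℝ) : ℝ :=
  if h : Sᶜ.Nonempty then Sᶜ.sup' h w else 0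

noncomputable def gfn (S : Finset P) (hS : S.Nonempty) (w : P → ℝ) : ℝ :=
  max 0 (S.inf' hS w - outSup S w)

noncomputable def Ffn (ν : P → P) (c : P → Fin m) (r : P → ℕ)
    (v : JoinVertex2 m) (w : P → ℝ) : ℝ :=
  ∑ S : Finset P, if hS : S.Nonempty then
      (if Lhat ν c r S hS = v then (S.card : ℝ) * gfn S hS w else 0) else 0

noncomputable def Dfn (w : P → ℝ) : ℝ :=
  ∑ S : Finset P, if hS : S.Nonempty then (S.card : ℝ) * gfn S hS w else 0

lemma gfn_nonneg (S : Finset P) (hS : S.Nonempty) (w : P → ℝ) : 0 ≤ gfn S hS w :=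
  le_max_left _ _

lemma Ffn_sum (ν : P → P) (c : P → Fin m) (r : P → ℕ) (w : P → ℝ) :
    ∑ v : JoinVertex2 m, Ffn ν c r v w = Dfn w := by
  unfold Ffn Dfn
  rw [Finset.sum_comm]
  refine Finset.sum_congr rfl fun S _ => ?_
  by_cases hS : S.Nonempty
  · simp [hS, Finset.sum_ite_eq]
  · simp [hS]

section Key
variable {ν : P → P} {c : P → Fin m} {r : P → ℕ}

/-- KEY: two comparable elements with the same orbit-max color have the same sign. -/
lemma epsP_eq_of_lt (hcol : ∀ a b : P, a < b → c a ≠ c (ν b) ∧ c (ν a) ≠ c b)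
    {x y : P} (hxy : x < y) (hm : mval ν c x = mval ν c y) :
    epsP ν c x = epsP ν c y := by
  obtain ⟨h1, h2⟩ := hcol x y hxy
  have h1' : (c x : ℕ) ≠ (c (ν y) : ℕ) := fun h => h1 (Fin.val_injective h)
  have h2' : (c (ν x) : ℕ) ≠ (c y : ℕ) := fun h => h2 (Fin.val_injective h)
  set a := (c x : ℕ); set a' := (c (ν x) : ℕ); set b := (c y : ℕ); set b' := (c (ν y) : ℕ)
  have hm' : max a a' = max b b' := hm
  by_cases hca : a = a'
  · exfalso; omega
  · by_cases hcb : b = b'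
    · exfalso; omega
    · unfold epsP
      rw [if_neg hca, if_neg hcb]
      simp only [decide_eq_decide]
      omega

lemma Lhat_mono (hcol : ∀ a b : P, a < b → c a ≠ c (ν b) ∧ c (ν a) ≠ c b)
    (hr : ∀ a b : P, a < b → r a < r b)
    {S S' : Finset P} (hS : S.Nonempty) (hS' : S'.Nonempty) (hsub : S ⊆ S')
    (hchain : IsChain (· ≤ ·) (S' : Set P)) :
    Lhat ν c r S hS ≤ Lhat ν c r S' hS' := by
  have hM : bigM ν c S ≤ bigM ν c S' := Finset.sup_mono hsub
  rcases lt_or_eq_of_le hM with hlt | heq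
  · refine Or.inr ?_
    show (⟨_, _⟩ : Fin m) < ⟨_, _⟩
    simpa [Fin.lt_def, xstar_mval] using hlt
  · left
    set x := xstar ν c r S hS with hx
    set y := xstar ν c r S' hS' with hy
    have hmx : mval ν c x = mval ν c y := by
      rw [xstar_mval, xstar_mval, heq]
    have heps : epsP ν c x = epsP ν c y := by
      rcases eq_or_ne x y with h | h
      · rw [h]
      · have hcomp := hchain (hsub (xstar_mem ν c r S hS)) (xstar_mem ν c r S' hS') h
        rcases hcomp with hle | hle
        · exact epsP_eq_of_lt hcol (lt_of_le_of_ne hle h) hmx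
        · exact (epsP_eq_of_lt hcol (lt_of_le_of_ne hle (Ne.symm h)) hmx.symm).symm
    unfold Lhat
    rw [JoinVertex2.mk.injEq]
    exact ⟨heps, Fin.mk_eq_mk.mpr hmx⟩

end Key

section Equiv
variable {ν : P → P} {c : P → Fin m} {r : P → ℕ}

lemma mval_nu (hinv : Function.Involutive ν) (x : P) : mval ν c (ν x) = mval ν c x := by
  unfold mval; rw [hinv x]; exact Nat.max_comm _ _

lemma epsP_flip (hinv : Function.Involutive ν) (hnfix : ∀ x : P, ν x ≠ x) (x : P) :
    epsP ν c (ν x) = !epsP ν c x := by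
  have hcc : (c (ν (ν x)) : ℕ) = (c x : ℕ) := by rw [hinv x]
  unfold epsP
  by_cases h : (c x : ℕ) = (c (ν x) : ℕ)
  · rw [if_pos h, if_pos (by omega)]
    unfold sgnP
    rw [hinv x]
    have hne : (Fintype.equivFin P) x ≠ (Fintype.equivFin P) (ν x) :=
      fun hh => hnfix x (Equiv.injective _ hh.symm)
    rcases lt_or_gt_of_ne hne with hlt | hlt <;> simp [hlt, not_lt_of_gt hlt, le_of_lt hlt]
  · rw [if_neg h, if_neg (by omega)]
    rw [hcc]
    rcases Nat.lt_or_ge (c x : ℕ) (c (ν x) : ℕ) with hlt | hge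
    · simp [hlt, Nat.not_lt_of_lt hlt]
    · have hlt : (c (ν x) : ℕ) < (c x : ℕ) := lt_of_le_of_ne hge (Ne.symm h)
      simp [hlt, Nat.not_lt_of_lt hlt]

lemma image_image_nu (hinv : Function.Involutive ν) (S : Finset P) :
    (S.image ν).image ν = S := by
  rw [Finset.image_image, hinv.comp_self, Finset.image_id]

lemma bigM_image (hinv : Function.Involutive ν) (S : Finset P) :
    bigM ν c (S.image ν) = bigM ν c S := by
  unfold bigM
  rw [Finset.sup_image]
  exact Finset.sup_congr rfl fun x _ => mval_nu hinv x

lemma Aset_image (hinv : Function.Involutive ν) (S : Finset P) :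
    Aset ν c (S.image ν) = (Aset ν c S).image ν := by
  unfold Aset
  rw [Finset.filter_image, bigM_image hinv]
  congr 1
  exact Finset.filter_congr fun x _ => by rw [mval_nu hinv]

lemma xstar_image (hinv : Function.Involutive ν)
    (hr : ∀ a b : P, a < b → r a < r b) (hrν : ∀ x, r (ν x) = r x)
    {S : Finset P} (hS : S.Nonempty) (hchain : IsChain (· ≤ ·) (S : Set P)) :
    xstar ν c r (S.image ν) (hS.image ν) = ν (xstar ν c r S hS) := by
  have hAim := Aset_image (c := c) hinv S
  -- the image point is ν z for some z in Aset S
  have hmem := (xstar_spec ν c r (S.image ν) (hS.image ν)).1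
  rw [hAim] at hmem
  obtain ⟨z, hz, hzeq⟩ := Finset.mem_image.mp hmem
  -- r-values agree
  have hrsup : (Aset ν c (S.image ν)).sup r = (Aset ν c S).sup r := by
    rw [hAim, Finset.sup_image]
    exact Finset.sup_congr rfl fun x _ => hrν x
  have h1 : r (xstar ν c r (S.image ν) (hS.image ν)) = r (xstar ν c r S hS) := by
    rw [← (xstar_spec ν c r (S.image ν) (hS.image ν)).2, hrsup,
      (xstar_spec ν c r S hS).2]
  have hz' : r z = r (xstar ν c r S hS) := by
    rw [← hrν z, hzeq, h1]
  -- z and xstar S are both in the chain S with equal rank, hence equal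
  have hzS : z ∈ S := (Finset.mem_filter.mp hz).1
  have hxS : xstar ν c r S hS ∈ S := xstar_mem ν c r S hS
  have : z = xstar ν c r S hS := by
    by_contra hne
    rcases hchain hzS hxS hne with hle | hle
    · exact absurd hz' (Nat.ne_of_lt (hr _ _ (lt_of_le_of_ne hle hne)))
    · exact absurd hz'.symm (Nat.ne_of_lt (hr _ _ (lt_of_le_of_ne hle (Ne.symm hne))))
  rw [← hzeq, this]

lemma Lhat_image (hinv : Function.Involutive ν) (hnfix : ∀ x : P, ν x ≠ x)
    (hr : ∀ a b : P, a < b → r a < r b) (hrν : ∀ x, r (ν x) = r x)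
    {S : Finset P} (hS : S.Nonempty) (hchain : IsChain (· ≤ ·) (S : Set P)) :
    Lhat ν c r (S.image ν) (hS.image ν) =
      ⟨!(Lhat ν c r S hS).b, (Lhat ν c r S hS).i⟩ := by
  have hx := xstar_image (c := c) hinv hr hrν hS hchain
  unfold Lhat
  rw [JoinVertex2.mk.injEq]
  constructor
  · rw [hx]; exact epsP_flip hinv hnfix _
  · rw [Fin.mk_eq_mk, hx]; exact mval_nu hinv _

lemma compl_image (hinv : Function.Involutive ν) (S : Finset P) :
    (S.image ν)ᶜ = Sᶜ.image ν := by
  ext y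
  simp only [Finset.mem_compl, Finset.mem_image]
  constructor
  · intro h
    exact ⟨ν y, fun hy => h ⟨ν y, hy, hinv y⟩, hinv y⟩
  · rintro ⟨z, hz, rfl⟩ ⟨z', hz', hzz⟩
    exact hz (hinv.injective hzz ▸ hz')

lemma gfn_image (hinv : Function.Involutive ν) {S : Finset P} (hS : S.Nonempty) (w : P → ℝ) :
    gfn (S.image ν) (hS.image ν) w = gfn S hS (fun q => w (ν q)) := by
  unfold gfn
  have h1 : (S.image ν).inf' (hS.image ν) w = S.inf' hS (fun q => w (ν q)) :=
    Finset.inf'_image (hS.image ν) w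
  have h2 : outSup (S.image ν) w = outSup S (fun q => w (ν q)) := by
    unfold outSup
    by_cases h : Sᶜ.Nonempty
    · have h' : ((S.image ν)ᶜ).Nonempty := by rw [compl_image hinv]; exact h.image ν
      rw [dif_pos h', dif_pos h]
      calc ((S.image ν)ᶜ).sup' h' w = (Sᶜ.image ν).sup' _ w :=
            Finset.sup'_congr h' (compl_image hinv S) (fun _ _ => rfl)
        _ = Sᶜ.sup' h (fun q => w (ν q)) := Finset.sup'_image _ w
    · have h' : ¬((S.image ν)ᶜ).Nonempty := by
        rw [compl_image hinv]
        simp only [Finset.image_nonempty]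
        exact h
      rw [dif_neg h', dif_neg h]
  rw [h1, h2]

end Equiv

section Level
variable {S S' : Finset P} {w : P → ℝ}

lemma out_lt_inf {hS : S.Nonempty} (hg : gfn S hS w ≠ 0) :
    outSup S w < S.inf' hS w := by
  unfold gfn at hg
  by_contra h
  push_neg at h
  exact hg (max_eq_left (by linarith))

lemma le_outSup {y : P} (hy : y ∉ S) : w y ≤ outSup S w := by
  have hmem : y ∈ Sᶜ := Finset.mem_compl.mpr hy
  unfold outSup
  rw [dif_pos ⟨y, hmem⟩]
  exact Finset.le_sup' w hmem

lemma outSup_nonneg (hw0 : ∀ x, 0 ≤ w x) : 0 ≤ outSup S w := by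
  unfold outSup
  split
  · next h => obtain ⟨y, hy⟩ := h; exact le_trans (hw0 y) (Finset.le_sup' w hy)
  · exact le_refl 0

lemma subset_support (hw0 : ∀ x, 0 ≤ w x) {hS : S.Nonempty} (hg : gfn S hS w ≠ 0) :
    (S : Set P) ⊆ {x | w x ≠ 0} := by
  intro x hx
  have h1 : S.inf' hS w ≤ w x := Finset.inf'_le w hx
  have h2 := out_lt_inf hg
  have h3 := outSup_nonneg (S := S) hw0
  intro h0
  rw [h0] at h1
  linarith

lemma level_nested (hS : S.Nonempty) (hS' : S'.Nonempty)
    (hg : gfn S hS w ≠ 0) (hg' : gfn S' hS' w ≠ 0) : S ⊆ S' ∨ S' ⊆ S := by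
  have key : ∀ (A B : Finset P) (hA : A.Nonempty) (hB : B.Nonempty),
      gfn A hA w ≠ 0 → gfn B hB w ≠ 0 →
      A.inf' hA w ≤ B.inf' hB w → B ⊆ A := by
    intro A B hA hB hgA _ hle y hy
    by_contra hyA
    have h1 : w y ≤ outSup A w := le_outSup hyA
    have h2 : B.inf' hB w ≤ w y := Finset.inf'_le w hy
    have h3 := out_lt_inf hgA
    linarith
  rcases le_total (S.inf' hS w) (S'.inf' hS' w) with h | h
  · exact Or.inr (key _ _ _ _ hg hg' h)
  · exact Or.inl (key _ _ _ _ hg' hg h)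

end Level

section Global
variable {ν : P → P} {c : P → Fin m} {r : P → ℕ}

lemma Dfn_pos {w : P → ℝ} (hw0 : ∀ x, 0 ≤ w x) (hsum : ∑ x, w x = 1) : 0 < Dfn w := by
  have hne : (Finset.univ : Finset P).Nonempty := by
    rw [Finset.univ_nonempty_iff]
    by_contra h
    rw [not_nonempty_iff] at h
    rw [Finset.sum_of_isEmpty] at hsum
    exact one_ne_zero hsum.symm
  set Mw := Finset.univ.sup' hne w with hMw
  set S₀ := Finset.univ.filter (fun y => Mw ≤ w y) with hS₀def
  have hS₀ : S₀.Nonempty := by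
    obtain ⟨y, hy, heq⟩ := Finset.exists_mem_eq_sup' hne w
    exact ⟨y, Finset.mem_filter.mpr ⟨Finset.mem_univ y, heq.le⟩⟩
  have hMpos : 0 < Mw := by
    have hx : ∃ x, w x ≠ 0 := by
      by_contra h
      push_neg at h
      rw [Finset.sum_congr rfl fun x _ => h x, Finset.sum_const, smul_zero] at hsum
      exact one_ne_zero hsum.symm
    obtain ⟨x, hx⟩ := hx
    exact lt_of_lt_of_le (lt_of_le_of_ne (hw0 x) (Ne.symm hx))
      (Finset.le_sup' w (Finset.mem_univ x))
  have hinf : Mw ≤ S₀.inf' hS₀ w :=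
    Finset.le_inf' hS₀ w fun b hb => (Finset.mem_filter.mp hb).2
  have hout : outSup S₀ w < Mw := by
    unfold outSup
    split
    · next h =>
      obtain ⟨y, hy, heq⟩ := Finset.exists_mem_eq_sup' h w
      rw [heq]
      have : ¬ Mw ≤ w y := fun hc => (Finset.mem_compl.mp hy) (by simp [hS₀def, hc])
      linarith [not_le.mp this]
    · exact hMpos
  have hg : 0 < gfn S₀ hS₀ w := lt_of_lt_of_le (by linarith) (le_max_right _ _)
  have hterm : (0:ℝ) < (S₀.card : ℝ) * gfn S₀ hS₀ w :=
    mul_pos (by exact_mod_cast Finset.card_pos.mpr hS₀) hg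
  unfold Dfn
  calc (0:ℝ) < (S₀.card : ℝ) * gfn S₀ hS₀ w := hterm
    _ = (if hS : S₀.Nonempty then (S₀.card : ℝ) * gfn S₀ hS w else 0) := by rw [dif_pos hS₀]
    _ ≤ _ := Finset.single_le_sum (f := fun S => if hS : S.Nonempty then (S.card : ℝ) * gfn S hS w else 0)
        (fun S _ => by
          by_cases h : S.Nonempty
          · rw [dif_pos h]; exact mul_nonneg (by positivity) (gfn_nonneg S h w)
          · rw [dif_neg h])
        (Finset.mem_univ S₀)

lemma Ffn_nonneg (v : JoinVertex2 m) (w : P → ℝ) : 0 ≤ Ffn ν c r v w := by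
  unfold Ffn
  refine Finset.sum_nonneg fun S _ => ?_
  split
  · next h =>
    split
    · exact mul_nonneg (by positivity) (gfn_nonneg S h w)
    · exact le_refl 0
  · exact le_refl 0

lemma Ffn_support {v : JoinVertex2 m} {w : P → ℝ} (hF : Ffn ν c r v w ≠ 0) :
    ∃ (S : Finset P) (hS : S.Nonempty), Lhat ν c r S hS = v ∧ gfn S hS w ≠ 0 := by
  unfold Ffn at hF
  obtain ⟨S, _, hS⟩ := Finset.exists_ne_zero_of_sum_ne_zero hF
  by_cases h : S.Nonempty
  · rw [dif_pos h] at hS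
    by_cases hL : Lhat ν c r S h = v
    · rw [if_pos hL] at hS
      exact ⟨S, h, hL, fun h0 => hS (by rw [h0, mul_zero])⟩
    · rw [if_neg hL] at hS; exact absurd rfl hS
  · rw [dif_neg h] at hS; exact absurd rfl hS

end Global

section EquivSum
variable {ν : P → P} {c : P → Fin m} {r : P → ℕ}

lemma flip_inj {p q : JoinVertex2 m} :
    (⟨!p.b, p.i⟩ : JoinVertex2 m) = ⟨!q.b, q.i⟩ ↔ p = q := by
  cases p; cases q; simp

lemma chain_of_image (hinv : Function.Involutive ν) (hmono : ∀ a b : P, a ≤ b → ν a ≤ ν b)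
    {S : Finset P} (h : IsChain (· ≤ ·) ((S.image ν : Finset P) : Set P)) :
    IsChain (· ≤ ·) (S : Set P) := by
  intro a ha b hb hne
  have h2 := h (Finset.mem_coe.mpr (Finset.mem_image_of_mem ν ha))
    (Finset.mem_coe.mpr (Finset.mem_image_of_mem ν hb)) (fun hc => hne (hinv.injective hc))
  rcases h2 with hle | hle
  · exact Or.inl (by have := hmono _ _ hle; rwa [hinv a, hinv b] at this)
  · exact Or.inr (by have := hmono _ _ hle; rwa [hinv a, hinv b] at this)

def nuEq (hinv : Function.Involutive ν) : Finset P ≃ Finset P where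
  toFun S := S.image ν
  invFun S := S.image ν
  left_inv S := image_image_nu hinv S
  right_inv S := image_image_nu hinv S

lemma Dfn_comp (hinv : Function.Involutive ν) (w : P → ℝ) :
    Dfn (fun q => w (ν q)) = Dfn w := by
  unfold Dfn
  refine Fintype.sum_equiv (nuEq hinv) _ _ fun S => ?_
  dsimp only [nuEq, Equiv.coe_fn_mk]
  by_cases h : S.Nonempty
  · rw [dif_pos h, dif_pos (h.image ν), Finset.card_image_of_injective _ hinv.injective,
      gfn_image hinv h w]
  · rw [dif_neg h, dif_neg (by simpa [Finset.image_nonempty] using h)]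

lemma Ffn_comp (hinv : Function.Involutive ν) (hmono : ∀ a b : P, a ≤ b → ν a ≤ ν b)
    (hnfix : ∀ x : P, ν x ≠ x)
    (hr : ∀ a b : P, a < b → r a < r b) (hrν : ∀ x, r (ν x) = r x)
    (w : P → ℝ) (hw0 : ∀ x, 0 ≤ w x) (hchain : IsChain (· ≤ ·) {x | w x ≠ 0})
    (p : JoinVertex2 m) :
    Ffn ν c r p (fun q => w (ν q)) = Ffn ν c r ⟨!p.b, p.i⟩ w := by
  unfold Ffn
  refine Fintype.sum_equiv (nuEq hinv) _ _ fun S => ?_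
  dsimp only [nuEq, Equiv.coe_fn_mk]
  by_cases h : S.Nonempty
  · rw [dif_pos h, dif_pos (h.image ν)]
    have hg : gfn (S.image ν) (h.image ν) w = gfn S h (fun q => w (ν q)) := gfn_image hinv h w
    by_cases h0 : gfn S h (fun q => w (ν q)) = 0
    · rw [h0, hg, h0, mul_zero]
      simp
    · have hgn : gfn (S.image ν) (h.image ν) w ≠ 0 := by rw [hg]; exact h0
      have hchainS' : IsChain (· ≤ ·) ((S.image ν : Finset P) : Set P) :=
        hchain.mono (subset_support hw0 hgn)
      have hchainS : IsChain (· ≤ ·) (S : Set P) := chain_of_image hinv hmono hchainS'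
      have hL := Lhat_image (c := c) (r := r) hinv hnfix hr hrν h hchainS
      rw [hL, hg, Finset.card_image_of_injective _ hinv.injective]
      exact if_congr flip_inj.symm rfl rfl
  · rw [dif_neg h, dif_neg (by simpa [Finset.image_nonempty] using h)]

end EquivSum

section Main
variable (ν : P → P) (c : P → Fin m) (r : P → ℕ)

lemma continuous_gfn (S : Finset P) (hS : S.Nonempty) :
    Continuous fun w : P → ℝ => gfn S hS w := by
  unfold gfn outSup
  have h1 : Continuous fun w : P → ℝ => S.inf' hS w :=
    Continuous.finset_inf'_apply hS (fun i _ => continuous_apply i)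
  have h2 : Continuous fun w : P → ℝ => (if h : Sᶜ.Nonempty then Sᶜ.sup' h w else 0) := by
    by_cases h : Sᶜ.Nonempty
    · simp only [dif_pos h]
      exact Continuous.finset_sup'_apply h (fun i _ => continuous_apply i)
    · simp only [dif_neg h]; exact continuous_const
  exact continuous_const.max (h1.sub h2)

lemma continuous_Dfn : Continuous fun w : P → ℝ => Dfn w := by
  unfold Dfn
  refine continuous_finset_sum _ fun S _ => ?_
  by_cases h : S.Nonempty
  · simp only [dif_pos h]
    exact continuous_const.mul (continuous_gfn S h)
  · simp only [dif_neg h]; exact continuous_const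

lemma continuous_Ffn (v : JoinVertex2 m) : Continuous fun w : P → ℝ => Ffn ν c r v w := by
  unfold Ffn
  refine continuous_finset_sum _ fun S _ => ?_
  by_cases h : S.Nonempty
  · simp only [dif_pos h]
    by_cases hL : Lhat ν c r S h = v
    · simp only [if_pos hL]
      exact continuous_const.mul (continuous_gfn S h)
    · simp only [if_neg hL]; exact continuous_const
  · simp only [dif_neg h]; exact continuous_const

theorem exists_equivariant_map
    (hinv : Function.Involutive ν) (hmono : ∀ a b : P, a ≤ b → ν a ≤ ν b)
    (hnfix : ∀ x : P, ν x ≠ x)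
    (hr : ∀ a b : P, a < b → r a < r b) (hrν : ∀ x, r (ν x) = r x)
    (hcol : ∀ a b : P, a < b → c a ≠ c (ν b) ∧ c (ν a) ≠ c b) :
    ∃ Φ : Realization P → Realization (JoinVertex2 m),
      Continuous Φ ∧
      ∀ x y : Realization P, (∀ q : P, y.val q = x.val (ν q)) →
        ∀ p : JoinVertex2 m, (Φ y).val p = (Φ x).val ⟨!p.b, p.i⟩ := by
  have hDpos : ∀ w : Realization P, 0 < Dfn w.val := fun w => Dfn_pos w.2.1 w.2.2.1
  refine ⟨fun w => ⟨fun v => Ffn ν c r v w.val / Dfn w.val, ?_, ?_, ?_⟩, ?_, ?_⟩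
  · exact fun v => div_nonneg (Ffn_nonneg v w.val) (hDpos w).le
  · rw [← Finset.sum_div, Ffn_sum]
    exact div_self (ne_of_gt (hDpos w))
  · -- chain condition
    intro p hp q hq hpq
    have hFp : Ffn ν c r p w.val ≠ 0 := fun h0 => hp (by simp [Set.mem_setOf_eq, h0])
    have hFq : Ffn ν c r q w.val ≠ 0 := fun h0 => hq (by simp [Set.mem_setOf_eq, h0])
    obtain ⟨S, hS, hLp, hgS⟩ := Ffn_support hFp
    obtain ⟨S', hS', hLq, hgS'⟩ := Ffn_support hFq
    rcases level_nested hS hS' hgS hgS' with hsub | hsub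
    · left
      rw [← hLp, ← hLq]
      exact Lhat_mono hcol hr hS hS' hsub (w.2.2.2.mono (subset_support w.2.1 hgS'))
    · right
      rw [← hLp, ← hLq]
      exact Lhat_mono hcol hr hS' hS hsub (w.2.2.2.mono (subset_support w.2.1 hgS))
  · -- continuity
    refine Continuous.subtype_mk (continuous_pi fun v => ?_) _
    exact ((continuous_Ffn ν c r v).comp continuous_subtype_val).div
      ((continuous_Dfn).comp continuous_subtype_val) (fun w => ne_of_gt (hDpos w))
  · -- equivariance
    intro x y hxy p
    have hy : y.val = fun q => x.val (ν q) := funext hxy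
    dsimp only
    rw [hy, Ffn_comp hinv hmono hnfix hr hrν x.val x.2.1 x.2.2.2 p, Dfn_comp hinv x.val]

end Main
end SCG

theorem sphere_strongCompat_triangleFree_chromatic'
    (V : Type*) [DecidableEq V] [Fintype V] (neg : V → V)
    (hinv : Function.Involutive neg)
    (K : Finset (Finset V))
    (hne : ∀ s ∈ K, s.Nonempty)
    (hdc : ∀ s ∈ K, ∀ t : Finset V, t ⊆ s → t.Nonempty → t ∈ K)
    (hact : ∀ s ∈ K, s.image neg ∈ K)
    (hfree : ∀ s ∈ K, Disjoint s (s.image neg))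
    (n : ℕ)
    (hdim_le : ∀ s ∈ K, s.card ≤ n + 1)
    (hdim_eq : ∃ s ∈ K, s.card = n + 1)
    (hind : indZ2 {s // s ∈ K} (negFace neg K hact) = n) :
    (SimpleGraph.fromRel (fun x y : {s // s ∈ K} =>
        (y.1 ≠ x.1 ∧ y.1 ≠ x.1.image neg) ∧
        (x.1 ⊆ y.1.image neg ∨ y.1.image neg ⊆ x.1))).CliqueFree 3 ∧
    (SimpleGraph.fromRel (fun x y : {s // s ∈ K} =>
        (y.1 ≠ x.1 ∧ y.1 ≠ x.1.image neg) ∧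
        (x.1 ⊆ y.1.image neg ∨ y.1.image neg ⊆ x.1))).chromaticNumber
      = ((n + 1 : ℕ) : ℕ∞) := by
  classical
  set P := {s // s ∈ K} with hP
  set νK : P → P := negFace neg K hact with hνK
  set G := (SimpleGraph.fromRel (fun x y : P =>
        (y.1 ≠ x.1 ∧ y.1 ≠ x.1.image neg) ∧
        (x.1 ⊆ y.1.image neg ∨ y.1.image neg ⊆ x.1))) with hG
  -- basic facts
  have hKne : ∀ x : P, x.1.Nonempty := fun x => hne x.1 x.2
  have hnn : ∀ s : Finset V, (s.image neg).image neg = s := fun s => by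
    rw [Finset.image_image, Function.Involutive.comp_self hinv, Finset.image_id]
  have hmono : ∀ s t : Finset V, s ⊆ t → s.image neg ⊆ t.image neg :=
    fun s t h => Finset.image_subset_image h
  have hinvK : Function.Involutive νK := fun x =>
    Subtype.ext (by show (x.1.image neg).image neg = x.1; exact hnn x.1)
  have hfreeK : ∀ x : P, Disjoint x.1 (x.1.image neg) := fun x => hfree x.1 x.2
  -- forbidden containments
  have F2 : ∀ a b : P, a.1 ⊆ b.1 → a.1 ⊆ b.1.image neg → False := by
    intro a b h1 h2
    obtain ⟨v, hv⟩ := hKne a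
    exact Finset.disjoint_left.mp (hfreeK b) (h1 hv) (h2 hv)
  have F3 : ∀ a b : P, b.1 ⊆ a.1 → b.1.image neg ⊆ a.1 → False := by
    intro a b h1 h2
    obtain ⟨v, hv⟩ := hKne b
    have hv' : neg v ∈ b.1.image neg := Finset.mem_image_of_mem neg hv
    exact Finset.disjoint_left.mp (hfreeK a) (h2 hv') (hmono _ _ h1 hv')
  have F1 : ∀ a : P, a.1 ⊆ a.1.image neg → False := fun a h => F2 a a subset_rfl h
  have F1' : ∀ a : P, a.1.image neg ⊆ a.1 → False := fun a h => F3 a a subset_rfl h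
  have hnfixK : ∀ x : P, νK x ≠ x := by
    intro x hx
    have h' : x.1.image neg = x.1 := by
      have := congrArg Subtype.val hx
      exact this
    exact F1' x (le_of_eq h')
  -- adjacency structure
  have hadj : ∀ a b : P, G.Adj a b →
      a.1 ≠ b.1 ∧ a.1 ≠ b.1.image neg ∧ (a.1 ⊆ b.1.image neg ∨ b.1.image neg ⊆ a.1) := by
    intro a b h
    rw [hG, SimpleGraph.fromRel_adj] at h
    obtain ⟨hab, hrel⟩ := h
    rcases hrel with ⟨⟨h1, h2⟩, h3⟩ | ⟨⟨h1, h2⟩, h3⟩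
    · refine ⟨fun h => h1 h.symm, fun h => h2 (by rw [h, hnn]), h3⟩
    · refine ⟨h1, h2, ?_⟩
      rcases h3 with h3 | h3
      · exact Or.inr (by have := hmono _ _ h3; rwa [hnn] at this)
      · exact Or.inl (by have := hmono _ _ h3; rwa [hnn] at this)
  constructor
  · -- triangle-free
    rintro t ⟨hclique, hcard⟩
    obtain ⟨a, b, c, hab, hac, hbc, rfl⟩ := Finset.card_eq_three.mp hcard
    have dab := (hadj a b (hclique (by simp) (by simp) hab)).2.2
    have dbc := (hadj b c (hclique (by simp) (by simp) hbc)).2.2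
    have dac := (hadj a c (hclique (by simp) (by simp) hac)).2.2
    have convA : ∀ s t : Finset V, s ⊆ t.image neg → s.image neg ⊆ t := by
      intro s t h
      have := hmono _ _ h; rwa [hnn] at this
    have convB : ∀ s t : Finset V, s.image neg ⊆ t → s ⊆ t.image neg := by
      intro s t h
      have := hmono _ _ h; rwa [hnn] at this
    have convC : ∀ s t : Finset V, s.image neg ⊆ t.image neg → s ⊆ t :=
      fun s t h => (Finset.image_subset_image_iff hinv.injective).mp h
    rcases dab with h1 | h1 <;> rcases dbc with h2 | h2 <;> rcases dac with h3 | h3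
    · exact F2 a c (h1.trans (convA _ _ h2)) h3
    · exact F1' c ((h3.trans h1).trans (convA _ _ h2))
    · exact F2 a b (h3.trans h2) h1
    · exact F3 b c (convC _ _ (h3.trans h1)) h2
    · exact F2 b c (convC _ _ (h1.trans h3)) h2
    · exact F3 a b (h2.trans h3) h1
    · exact F1' b ((h1.trans h3).trans h2)
    · exact F3 a c ((convB _ _ h2).trans h1) h3
  · -- chromatic number
    have hcardν : ∀ x : P, (x.1.image neg).card = x.1.card :=
      fun x => Finset.card_image_of_injective _ hinv.injective
    -- upper bound coloring by cardinality
    have hcol1 : G.Colorable (n + 1) := by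
      refine ⟨SimpleGraph.Coloring.mk
        (fun x => (⟨x.1.card - 1, by
          have h1 := hdim_le x.1 x.2
          have h2 := Finset.card_pos.mpr (hKne x)
          omega⟩ : Fin (n + 1))) ?_⟩
      intro a b hA heq
      obtain ⟨hne1, hne2, hsub⟩ := hadj a b hA
      have h1 := hdim_le a.1 a.2
      have h2 := hdim_le b.1 b.2
      have h3 := Finset.card_pos.mpr (hKne a)
      have h4 := Finset.card_pos.mpr (hKne b)
      have hcard : a.1.card = b.1.card := by
        have h5 : a.1.card - 1 = b.1.card - 1 := by
          simpa using congrArg Fin.val heq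
        omega
      rcases hsub with h | h
      · exact hne2 (Finset.eq_of_subset_of_card_le h (by rw [hcardν b, hcard]))
      · exact hne2 ((Finset.eq_of_subset_of_card_le h (by rw [hcardν b, hcard])).symm)
    -- lower bound
    have hlow : ∀ m : ℕ, G.Colorable m → n + 1 ≤ m := by
      intro m hc
      obtain ⟨C⟩ := hc
      obtain ⟨s0, hs0, _⟩ := hdim_eq
      rcases m with - | m'
      · exact (C ⟨s0, hs0⟩).elim0
      -- the coloring property along chains
      have hcol : ∀ a b : P, a < b → C a ≠ C (νK b) ∧ C (νK a) ≠ C b := by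
        intro a b hab
        have hsub : a.1 ⊆ b.1 := hab.le
        have hne' : a.1 ≠ b.1 := fun h => (ne_of_lt hab) (Subtype.ext h)
        have hνb : (νK b).1 = b.1.image neg := rfl
        have hνa : (νK a).1 = a.1.image neg := rfl
        have hanb : a.1 ≠ b.1.image neg := by
          intro h
          exact F1' b (h ▸ hsub)
        have hbna : b.1 ≠ a.1.image neg := by
          intro h
          exact F1 a (hsub.trans (le_of_eq h))
        constructor
        · refine C.valid ?_
          rw [hG, SimpleGraph.fromRel_adj]
          refine ⟨fun h => hanb (congrArg Subtype.val h), Or.inl ⟨⟨?_, ?_⟩, Or.inl ?_⟩⟩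
          · rw [hνb]; exact fun h => hanb h.symm
          · rw [hνb]
            intro h
            exact hne' (((Finset.image_subset_image_iff (f := neg) hinv.injective).mp
              (le_of_eq h)).antisymm hsub).symm
          · rw [hνb, hnn]; exact hsub
        · refine C.valid ?_
          rw [hG, SimpleGraph.fromRel_adj]
          refine ⟨fun h => hbna (congrArg Subtype.val h).symm, Or.inl ⟨⟨?_, ?_⟩, Or.inl ?_⟩⟩
          · rw [hνa]; exact hbna
          · rw [hνa, hnn]; exact hne'.symm
          · rw [hνa]; exact Finset.image_subset_image hsub
      have hmonoK : ∀ a b : P, a ≤ b → νK a ≤ νK b :=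
        fun a b h => Finset.image_subset_image (h : a.1 ⊆ b.1)
      have hrK : ∀ a b : P, a < b → a.1.card < b.1.card := by
        intro a b h
        refine Finset.card_lt_card (ssubset_of_subset_of_ne h.le ?_)
        exact fun hh => (ne_of_lt h) (Subtype.ext hh)
      obtain ⟨Φ, hΦc, hΦe⟩ := SCG.exists_equivariant_map νK C (fun x : P => x.1.card)
        hinvK hmonoK hnfixK hrK (fun x => hcardν x) hcol
      have hmem : m' ∈ {k : ℕ | ∃ Φ : Realization P → Realization (JoinVertex2 (k + 1)),
          Continuous Φ ∧
          ∀ x y : Realization P,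
            (∀ q : P, y.val q = x.val (νK q)) →
            ∀ p : JoinVertex2 (k + 1), (Φ y).val p = (Φ x).val ⟨!p.b, p.i⟩} :=
        ⟨Φ, hΦc, hΦe⟩
      have hle : indZ2 P νK ≤ m' := Nat.sInf_le hmem
      rw [hind] at hle
      omega
    -- conclude
    have heq := hcol1.chromaticNumber_eq_sInf
    rw [heq]
    have : sInf {n' : ℕ | G.Colorable n'} = n + 1 :=
      le_antisymm (Nat.sInf_le hcol1) (le_csInf ⟨n + 1, hcol1⟩ fun b hb => hlow b hb)
    rw [this]


/-- Let `K` be a finite free simplicial `ℤ₂`-complex triangulating `𝕊ⁿ`, so that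
`dim K = n` and `ind_{ℤ₂} ‖K‖ = n`. Then the strong compatibility graph of the face
poset of `K` (vertices the nonempty faces, `σ, τ` adjacent iff `τ ∉ {σ, -σ}` and `σ`
is comparable with `-τ`) is triangle-free and has chromatic number exactly `n + 1`. -/
theorem sphere_strongCompat_triangleFree_chromatic
    (V : Type*) [DecidableEq V] [Fintype V] (neg : V → V)
    (hinv : Function.Involutive neg)
    (K : Finset (Finset V))
    (hne : ∀ s ∈ K, s.Nonempty)
    (hdc : ∀ s ∈ K, ∀ t : Finset V, t ⊆ s → t.Nonempty → t ∈ K)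
    (hact : ∀ s ∈ K, s.image neg ∈ K)
    (hfree : ∀ s ∈ K, Disjoint s (s.image neg))
    (n : ℕ)
    (hdim_le : ∀ s ∈ K, s.card ≤ n + 1)
    (hdim_eq : ∃ s ∈ K, s.card = n + 1)
    (hind : indZ2 {s // s ∈ K} (negFace neg K hact) = n) :
    (SimpleGraph.fromRel (fun x y : {s // s ∈ K} =>
        (y.1 ≠ x.1 ∧ y.1 ≠ x.1.image neg) ∧
        (x.1 ⊆ y.1.image neg ∨ y.1.image neg ⊆ x.1))).CliqueFree 3 ∧
    (SimpleGraph.fromRel (fun x y : {s // s ∈ K} =>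
        (y.1 ≠ x.1 ∧ y.1 ≠ x.1.image neg) ∧
        (x.1 ⊆ y.1.image neg ∨ y.1.image neg ⊆ x.1))).chromaticNumber
      = ((n + 1 : ℕ) : ℕ∞) := by
  exact sphere_strongCompat_triangleFree_chromatic' V neg hinv K hne hdc hact hfree n
    hdim_le hdim_eq hind
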